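/- Let m be a non-negative integer, a₀ > 0, t ∈ ℝ, and set N_m := (Γ(m+1/2) / (2a₀)^{m+1/2})^{−1/2}, so that the function φ_m(k) := N_m k^m exp(−a₀ k²) is L²-normalized. Then ∫_ℝ |φ_m(k)|² exp(−itk²) dk = (1 + it/(2a₀))^{−(m+1/2)}, where the right-hand side is the principal complex power. -/

import Mathlib

open MeasureTheory Filter

open Complex in
lemma aux_cpow_ofReal_mul {r : ℝ} (hr : 0 < r) {z : ℂ} (hz : z ≠ 0) (s : ℂ) :
    ((r : ℂ) * z) ^ s = (r : ℂ) ^ s * z ^ s := by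
  have hr' : (r : ℂ) ≠ 0 := ofReal_ne_zero.mpr hr.ne'
  rw [cpow_def_of_ne_zero (mul_ne_zero hr' hz), cpow_def_of_ne_zero hr',
    cpow_def_of_ne_zero hz, Complex.log_ofReal_mul hr hz, add_mul, Complex.exp_add,
    Complex.ofReal_log hr.le]

lemma aux_key (n : ℕ) {b : ℝ} (hb : 0 < b) (x : ℝ) :
    |x| ^ n * Real.exp (-b * x ^ 2)
      ≤ (n.factorial * Real.exp (1 / (2 * b))) * Real.exp (-(b / 2) * x ^ 2) := by
  have hb' : (0 : ℝ) < 2 * b := by linarith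
  have h1 : |x| ^ n ≤ n.factorial * Real.exp |x| := by
    have := Real.pow_div_factorial_le_exp (x := |x|) (abs_nonneg x) n
    rw [div_le_iff₀ (by positivity)] at this
    linarith
  have h2 : 2 * b * |x| ≤ b ^ 2 * x ^ 2 + 1 := by
    nlinarith [sq_nonneg (b * |x| - 1), sq_abs x]
  have h2' : |x| ≤ (b / 2) * x ^ 2 + 1 / (2 * b) := by
    have heq : (b / 2) * x ^ 2 + 1 / (2 * b) = (b ^ 2 * x ^ 2 + 1) / (2 * b) := by
      field_simp
    rw [heq, le_div_iff₀ hb']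
    linarith
  calc |x| ^ n * Real.exp (-b * x ^ 2)
      ≤ (n.factorial * Real.exp |x|) * Real.exp (-b * x ^ 2) :=
        mul_le_mul_of_nonneg_right h1 (Real.exp_pos _).le
    _ = n.factorial * Real.exp (|x| + (-b * x ^ 2)) := by rw [mul_assoc, ← Real.exp_add]
    _ ≤ n.factorial * Real.exp (1 / (2 * b) + (-(b / 2) * x ^ 2)) := by
        apply mul_le_mul_of_nonneg_left _ (Nat.cast_nonneg _)
        exact Real.exp_le_exp.mpr (by nlinarith)
    _ = (n.factorial * Real.exp (1 / (2 * b))) * Real.exp (-(b / 2) * x ^ 2) := by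
        rw [mul_assoc, ← Real.exp_add]

lemma aux_int_abs (n : ℕ) {b : ℝ} (hb : 0 < b) :
    Integrable fun x : ℝ => |x| ^ n * Real.exp (-b * x ^ 2) := by
  refine Integrable.mono' ((integrable_exp_neg_mul_sq (half_pos hb)).const_mul
    (n.factorial * Real.exp (1 / (2 * b)))) ?_ (ae_of_all _ fun x => ?_)
  · exact ((continuous_abs.pow n).mul (by fun_prop)).aestronglyMeasurable
  · rw [Real.norm_eq_abs, abs_of_nonneg (by positivity)]
    exact aux_key n hb x

lemma aux_int_pow (n : ℕ) {b : ℂ} (hb : 0 < b.re) :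
    Integrable fun x : ℝ => (x : ℂ) ^ n * Complex.exp (-b * (x : ℂ) ^ 2) := by
  refine (aux_int_abs n hb).mono' ?_ (ae_of_all _ fun x => ?_)
  · exact ((Complex.continuous_ofReal.pow n).mul (by fun_prop)).aestronglyMeasurable
  · rw [norm_mul, norm_pow, Complex.norm_real, Real.norm_eq_abs, norm_cexp_neg_mul_sq]

lemma aux_tendsto (n : ℕ) {b : ℂ} (hb : 0 < b.re) :
    Tendsto (fun x : ℝ => (x : ℂ) ^ n * Complex.exp (-b * (x : ℂ) ^ 2)) atTop (nhds 0) := by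
  apply squeeze_zero_norm (a := fun x : ℝ =>
      (n.factorial * Real.exp (1 / (2 * b.re))) * Real.exp (-(b.re / 2) * x ^ 2))
  · intro x
    rw [norm_mul, norm_pow, Complex.norm_real, Real.norm_eq_abs, norm_cexp_neg_mul_sq]
    exact aux_key n hb x
  · rw [show (0 : ℝ) = (n.factorial * Real.exp (1 / (2 * b.re))) * 0 by ring]
    apply Tendsto.const_mul
    apply Real.tendsto_exp_atBot.comp
    simp_rw [neg_mul]
    exact tendsto_neg_atBot_iff.mpr ((tendsto_pow_atTop two_ne_zero).const_mul_atTop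
      (half_pos hb))

lemma aux_even (n : ℕ) {b : ℂ} (hb : 0 < b.re) :
    ∫ x : ℝ, (x : ℂ) ^ (2 * n) * Complex.exp (-b * (x : ℂ) ^ 2)
      = 2 * ∫ x : ℝ in Set.Ioi (0 : ℝ),
          (x : ℂ) ^ (2 * n) * Complex.exp (-b * (x : ℂ) ^ 2) := by
  have hint := aux_int_pow (2 * n) hb
  have heq : ∀ x : ℝ, ((-x : ℝ) : ℂ) ^ (2 * n) * Complex.exp (-b * ((-x : ℝ) : ℂ) ^ 2)
      = (x : ℂ) ^ (2 * n) * Complex.exp (-b * (x : ℂ) ^ 2) := by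
    intro x
    push_cast
    rw [Even.neg_pow (even_two_mul n), neg_sq]
  rw [← intervalIntegral.integral_Iic_add_Ioi (b := (0:ℝ)) hint.integrableOn hint.integrableOn]
  have hIic : ∫ x : ℝ in Set.Iic (0:ℝ), (x : ℂ) ^ (2 * n) * Complex.exp (-b * (x : ℂ) ^ 2)
      = ∫ x : ℝ in Set.Ioi (0:ℝ), (x : ℂ) ^ (2 * n) * Complex.exp (-b * (x : ℂ) ^ 2) := by
    have h1 := integral_comp_neg_Iic (0 : ℝ)
      (fun x : ℝ => (x : ℂ) ^ (2 * n) * Complex.exp (-b * (x : ℂ) ^ 2))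
    simp only [neg_zero] at h1
    rw [← h1]
    exact setIntegral_congr_fun measurableSet_Iic fun x _ => (heq x).symm
  rw [hIic]
  ring

lemma aux_main : ∀ (m : ℕ) {b : ℂ}, 0 < b.re →
    ∫ x : ℝ, (x : ℂ) ^ (2 * m) * Complex.exp (-b * (x : ℂ) ^ 2)
      = Complex.Gamma ((m : ℂ) + 1 / 2) * b ^ (-((m : ℂ) + 1 / 2)) := by
  intro m
  induction m with
  | zero =>
    intro b hb
    have hbne : b ≠ 0 := fun h => by simp [h] at hb
    simp only [Nat.cast_zero, zero_add, mul_zero, pow_zero, one_mul]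
    rw [integral_gaussian_complex hb]
    have harg : b.arg ≠ Real.pi := by
      intro h
      have := Complex.arg_eq_pi_iff.mp h
      linarith [this.1]
    rw [div_eq_mul_inv, aux_cpow_ofReal_mul Real.pi_pos (inv_ne_zero hbne),
      Complex.inv_cpow _ _ harg, ← Complex.cpow_neg, Complex.Gamma_one_half_eq]
  | succ m ih =>
    intro b hb
    have hbne : b ≠ 0 := fun h => by simp [h] at hb
    have key : ∫ x : ℝ in Set.Ioi (0:ℝ),
        ((2 * (m:ℂ) + 1) * ((x:ℂ) ^ (2*m) * Complex.exp (-b * (x:ℂ) ^ 2))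
          - 2 * b * ((x:ℂ) ^ (2*(m+1)) * Complex.exp (-b * (x:ℂ) ^ 2))) = 0 := by
      have hderiv : ∀ x : ℝ, HasDerivAt
          (fun y : ℝ => (y:ℂ) ^ (2*m+1) * Complex.exp (-b * (y:ℂ) ^ 2))
          ((2 * (m:ℂ) + 1) * ((x:ℂ) ^ (2*m) * Complex.exp (-b * (x:ℂ) ^ 2))
            - 2 * b * ((x:ℂ) ^ (2*(m+1)) * Complex.exp (-b * (x:ℂ) ^ 2))) x := by
        intro x
        have h1 : HasDerivAt (fun z : ℂ => z ^ (2*m+1) * Complex.exp (-b * z ^ 2))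
            ((2*m+1 : ℕ) * (x:ℂ) ^ (2*m) * Complex.exp (-b * (x:ℂ) ^ 2)
              + (x:ℂ) ^ (2*m+1) * (Complex.exp (-b * (x:ℂ) ^ 2) * (-b * (2 * (x:ℂ) ^ 1)))) x := by
          have hp := hasDerivAt_pow (2*m+1) (x:ℂ)
          have he : HasDerivAt (fun z : ℂ => Complex.exp (-b * z ^ 2))
              (Complex.exp (-b * (x:ℂ) ^ 2) * (-b * (2 * (x:ℂ) ^ 1))) x := by
            have := ((hasDerivAt_pow 2 (x:ℂ)).const_mul (-b)).cexp
            simpa using this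
          have hpm := hp.mul he
          rw [Nat.add_sub_cancel] at hpm
          exact hpm
        have h2 := h1.comp_ofReal
        convert h2 using 1
        push_cast
        ring
      have hint : IntegrableOn (fun x : ℝ =>
          (2 * (m:ℂ) + 1) * ((x:ℂ) ^ (2*m) * Complex.exp (-b * (x:ℂ) ^ 2))
            - 2 * b * ((x:ℂ) ^ (2*(m+1)) * Complex.exp (-b * (x:ℂ) ^ 2))) (Set.Ioi (0:ℝ)) :=
        (((aux_int_pow (2*m) hb).const_mul _).sub
          ((aux_int_pow (2*(m+1)) hb).const_mul _)).integrableOn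
      have htend : Tendsto (fun y : ℝ => (y:ℂ) ^ (2*m+1) * Complex.exp (-b * (y:ℂ) ^ 2))
          atTop (nhds 0) := aux_tendsto (2*m+1) hb
      have hFTC := integral_Ioi_of_hasDerivAt_of_tendsto
        (f := fun y : ℝ => (y:ℂ) ^ (2*m+1) * Complex.exp (-b * (y:ℂ) ^ 2))
        ((hderiv 0).continuousAt.continuousWithinAt) (fun x _ => hderiv x) hint htend
      rw [hFTC]
      simp
    have h1 : ∫ x : ℝ in Set.Ioi (0:ℝ),
        (2 * (m:ℂ) + 1) * ((x:ℂ) ^ (2*m) * Complex.exp (-b * (x:ℂ) ^ 2))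
          = 2 * b * ∫ x : ℝ in Set.Ioi (0:ℝ),
              (x:ℂ) ^ (2*(m+1)) * Complex.exp (-b * (x:ℂ) ^ 2) := by
      rw [← integral_const_mul, ← sub_eq_zero, ← integral_sub
        ((aux_int_pow (2*m) hb).integrableOn.const_mul _)
        ((aux_int_pow (2*(m+1)) hb).integrableOn.const_mul _)]
      exact key
    rw [integral_const_mul] at h1
    have h2 : ∫ x : ℝ in Set.Ioi (0:ℝ), (x:ℂ) ^ (2*(m+1)) * Complex.exp (-b * (x:ℂ) ^ 2)
        = (2 * (m:ℂ) + 1) / (2 * b)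
          * ∫ x : ℝ in Set.Ioi (0:ℝ), (x:ℂ) ^ (2*m) * Complex.exp (-b * (x:ℂ) ^ 2) := by
      rw [div_mul_eq_mul_div, eq_div_iff (mul_ne_zero two_ne_zero hbne)]
      linear_combination -h1
    have hI : ∫ x : ℝ in Set.Ioi (0:ℝ), (x:ℂ) ^ (2*m) * Complex.exp (-b * (x:ℂ) ^ 2)
        = Complex.Gamma ((m : ℂ) + 1 / 2) * b ^ (-((m : ℂ) + 1 / 2)) / 2 := by
      have h := aux_even m hb
      rw [ih hb] at h
      rw [eq_div_iff (two_ne_zero (α := ℂ))]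
      linear_combination -h
    rw [aux_even (m+1) hb, h2, hI]
    have hsne : ((m:ℂ) + 1/2) ≠ 0 := by
      intro hc
      have := congrArg Complex.re hc
      simp at this
      have : (0:ℝ) ≤ (m:ℝ) := Nat.cast_nonneg m
      linarith
    have hGamma : Complex.Gamma (((m+1 : ℕ):ℂ) + 1/2)
        = ((m:ℂ) + 1/2) * Complex.Gamma ((m:ℂ) + 1/2) := by
      have he : (((m+1 : ℕ):ℂ) + 1/2) = ((m:ℂ) + 1/2) + 1 := by push_cast; ring
      rw [he, Complex.Gamma_add_one _ hsne]
    have hpow : b ^ (-(((m+1 : ℕ):ℂ) + 1/2)) = b ^ (-((m:ℂ) + 1/2)) * b ^ (-1 : ℂ) := by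
      rw [← Complex.cpow_add _ _ hbne]
      congr 1
      push_cast
      ring
    rw [hGamma, hpow, Complex.cpow_neg_one]
    field_simp

theorem stmt14 (m : ℕ) (a₀ t : ℝ) (ha : a₀ > 0) (N : ℝ)
    (hN : N = (Real.Gamma ((m : ℝ) + 1 / 2) / (2 * a₀) ^ ((m : ℝ) + 1 / 2)) ^ (-(1 : ℝ) / 2)) :
    ∫ k : ℝ, (((N * k ^ m * Real.exp (-a₀ * k ^ 2)) ^ 2 : ℝ) : ℂ) *
        Complex.exp (-(Complex.I * (t : ℂ) * (k : ℂ) ^ 2)) =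
      (1 + Complex.I * (t : ℂ) / (2 * (a₀ : ℂ))) ^ (-((m : ℂ) + 1 / 2)) := by
  have h2a : (0:ℝ) < 2 * a₀ := by linarith
  have hbre : (2*(a₀:ℂ) + Complex.I * (t:ℂ)).re = 2 * a₀ := by simp
  have hb : 0 < (2*(a₀:ℂ) + Complex.I * (t:ℂ)).re := by rw [hbre]; linarith
  have hbne : (2*(a₀:ℂ) + Complex.I * (t:ℂ)) ≠ 0 := fun h => by
    rw [h] at hbre; simp at hbre; linarith
  have hpt : ∀ k : ℝ, (((N * k ^ m * Real.exp (-a₀ * k ^ 2)) ^ 2 : ℝ) : ℂ) *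
        Complex.exp (-(Complex.I * (t:ℂ) * (k:ℂ) ^ 2))
      = ((N^2 : ℝ) : ℂ) * ((k:ℂ) ^ (2*m)
          * Complex.exp (-(2*(a₀:ℂ) + Complex.I * (t:ℂ)) * (k:ℂ)^2)) := by
    intro k
    push_cast [Complex.ofReal_exp]
    rw [mul_pow, mul_pow, ← Complex.exp_nat_mul, ← pow_mul,
      mul_assoc ((N:ℂ) ^ 2 * (k:ℂ) ^ (m * 2)), ← Complex.exp_add]
    push_cast
    rw [show (2:ℂ) * (-(a₀:ℂ) * (k:ℂ) ^ 2) + -(Complex.I * (t:ℂ) * (k:ℂ) ^ 2)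
        = -(2*(a₀:ℂ) + Complex.I * (t:ℂ)) * (k:ℂ) ^ 2 by ring]
    ring
  rw [integral_congr_ae (ae_of_all _ hpt), integral_const_mul, aux_main m hb]
  have hGpos : 0 < Real.Gamma ((m:ℝ) + 1/2) := Real.Gamma_pos_of_pos (by positivity)
  have hrp : (0:ℝ) < (2*a₀) ^ ((m:ℝ) + 1/2) := Real.rpow_pos_of_pos h2a _
  have hN2 : N^2 = (2*a₀) ^ ((m:ℝ) + 1/2) / Real.Gamma ((m:ℝ) + 1/2) := by
    rw [hN, ← Real.rpow_natCast (_ ^ (-(1:ℝ)/2)) 2,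
      ← Real.rpow_mul (le_of_lt (div_pos hGpos hrp))]
    norm_num
    rw [Real.rpow_neg_one, inv_div]
  have hGc : Complex.Gamma ((m:ℂ) + 1/2) = ((Real.Gamma ((m:ℝ) + 1/2) : ℝ) : ℂ) := by
    rw [show ((m:ℂ) + 1/2) = (((m:ℝ) + 1/2 : ℝ) : ℂ) by push_cast; ring, Complex.Gamma_ofReal]
  have hbeq : 1 + Complex.I * (t:ℂ) / (2 * (a₀:ℂ))
      = (((2*a₀)⁻¹ : ℝ) : ℂ) * (2*(a₀:ℂ) + Complex.I * (t:ℂ)) := by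
    have h2ac : (2*(a₀:ℂ)) ≠ 0 := by
      intro h
      have := congrArg Complex.re h
      simp at this
      linarith
    push_cast
    field_simp
    have ha0 : (a₀:ℂ) ≠ 0 := Complex.ofReal_ne_zero.mpr (by linarith)
    rw [add_div, mul_div_cancel_right₀ _ ha0]
  rw [hbeq, aux_cpow_ofReal_mul (inv_pos.mpr h2a) hbne]
  have hexp : (-((m:ℂ) + 1/2)) = (((-((m:ℝ) + 1/2)) : ℝ) : ℂ) := by push_cast; ring
  rw [hexp, ← Complex.ofReal_cpow (inv_nonneg.mpr h2a.le),
    Real.inv_rpow h2a.le, ← Real.rpow_neg h2a.le, neg_neg, hGc, hN2]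
  have hGne : ((Real.Gamma ((m:ℝ) + 1/2)) : ℂ) ≠ 0 := Complex.ofReal_ne_zero.mpr hGpos.ne'
  rw [Complex.ofReal_div, div_mul_eq_mul_div, mul_left_comm, mul_div_cancel_left₀ _ hGne]
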